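/- There exists an absolute constant K ≥ 1 with the following property: for every square-summable sequence c⁰ : ℤ → [0,∞) there exists a sequence c : ℤ → [0,∞) such that (i) c⁰_k ≤ c_k for every k ∈ ℤ, (ii) ‖c‖_{ℓ²(ℤ)} ≤ K · ‖c⁰‖_{ℓ²(ℤ)}, and (iii) (Mc)_k ≤ K · c_k for every k ∈ ℤ. (In the paper's terminology: every ℓ² frequency envelope can be placed under a comparable admissible envelope satisfying the maximal property.) -/

import Mathlib

open scoped ENNReal NNReal

namespace AdmEnv

/-- Discrete average of `f` over the window of radius `j` centered at `k`. -/
noncomputable def Av (j : ℕ) (f : ℤ → ℝ≥0∞) (k : ℤ) : ℝ≥0∞ :=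
  (((2 * j + 1 : ℕ) : ℝ≥0∞))⁻¹ * ∑ l ∈ Finset.Icc (k - (j : ℤ)) (k + (j : ℤ)), f l

/-- Centered discrete Hardy–Littlewood maximal function. -/
noncomputable def MM (f : ℤ → ℝ≥0∞) (k : ℤ) : ℝ≥0∞ := ⨆ j : ℕ, Av j f k

lemma card_win (k : ℤ) (j : ℕ) :
    (Finset.Icc (k - (j : ℤ)) (k + (j : ℤ))).card = 2 * j + 1 := by
  rw [Int.card_Icc]; omega

lemma two1_ne_zero (j : ℕ) : ((2 * j + 1 : ℕ) : ℝ≥0∞) ≠ 0 := by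
  simp

lemma two1_ne_top (j : ℕ) : ((2 * j + 1 : ℕ) : ℝ≥0∞) ≠ ⊤ := ENNReal.natCast_ne_top _

lemma mul_self_le (x y : ℝ≥0∞) : x * y ≤ x ^ 2 + y ^ 2 := by
  rcases le_total x y with h | h
  · calc x * y ≤ y * y := mul_le_mul_left h y
      _ = y ^ 2 := (sq y).symm
      _ ≤ x ^ 2 + y ^ 2 := le_add_self
  · calc x * y ≤ x * x := mul_le_mul_right h x
      _ = x ^ 2 := (sq x).symm
      _ ≤ x ^ 2 + y ^ 2 := le_self_add

lemma sq_sum_le (s : Finset ℤ) (f : ℤ → ℝ≥0∞) :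
    (∑ l ∈ s, f l) ^ 2 ≤ (2 * s.card) * ∑ l ∈ s, (f l) ^ 2 := by
  rw [sq, Finset.sum_mul_sum]
  calc ∑ l ∈ s, ∑ m ∈ s, f l * f m
      ≤ ∑ l ∈ s, ∑ m ∈ s, ((f l) ^ 2 + (f m) ^ 2) := by
        refine Finset.sum_le_sum fun l _ => Finset.sum_le_sum fun m _ => mul_self_le _ _
    _ = (2 * s.card) * ∑ l ∈ s, (f l) ^ 2 := by
        simp only [Finset.sum_add_distrib, Finset.sum_const, nsmul_eq_mul,
          ← Finset.mul_sum]
        ring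

lemma Av_le_MM (j : ℕ) (f : ℤ → ℝ≥0∞) (k : ℤ) : Av j f k ≤ MM f k :=
  le_iSup (fun j => Av j f k) j

lemma self_le_MM (f : ℤ → ℝ≥0∞) (k : ℤ) : f k ≤ MM f k := by
  have h : Av 0 f k = f k := by
    simp [Av]
  rw [← h]; exact Av_le_MM 0 f k

lemma Av_mono {f g : ℤ → ℝ≥0∞} (h : ∀ l, f l ≤ g l) (j : ℕ) (k : ℤ) :
    Av j f k ≤ Av j g k :=
  mul_le_mul_right (Finset.sum_le_sum fun l _ => h l) _

lemma Av_add (j : ℕ) (f g : ℤ → ℝ≥0∞) (k : ℤ) :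
    Av j (fun l => f l + g l) k = Av j f k + Av j g k := by
  simp [Av, Finset.sum_add_distrib, mul_add]

lemma Av_const (j : ℕ) (c : ℝ≥0∞) (k : ℤ) : Av j (fun _ => c) k = c := by
  simp only [Av, Finset.sum_const, card_win, nsmul_eq_mul, ← mul_assoc]
  rw [ENNReal.inv_mul_cancel (two1_ne_zero j) (two1_ne_top j), one_mul]

lemma Av_smul (j : ℕ) (c : ℝ≥0∞) (f : ℤ → ℝ≥0∞) (k : ℤ) :
    Av j (fun l => c * f l) k = c * Av j f k := by
  simp only [Av, ← Finset.mul_sum]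
  ring

lemma Av_tsum (g : ℕ → ℤ → ℝ≥0∞) (j : ℕ) (k : ℤ) :
    Av j (fun l => ∑' i, g i l) k = ∑' i, Av j (g i) k := by
  simp only [Av]
  rw [← Summable.tsum_finsetSum (fun (l : ℤ) _ => ENNReal.summable), ENNReal.tsum_mul_left]

lemma Av_sq_le (f : ℤ → ℝ≥0∞) (j : ℕ) (k : ℤ) :
    (Av j f k) ^ 2 ≤ 2 * ∑' l, (f l) ^ 2 := by
  have hc := card_win k j
  set c : ℝ≥0∞ := ((2 * j + 1 : ℕ) : ℝ≥0∞) with hcdef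
  calc (Av j f k) ^ 2 = c⁻¹ ^ 2 * (∑ l ∈ Finset.Icc (k - (j : ℤ)) (k + (j : ℤ)), f l) ^ 2 := by
        rw [Av, mul_pow]
    _ ≤ c⁻¹ ^ 2 * ((2 * c) * ∑ l ∈ Finset.Icc (k - (j : ℤ)) (k + (j : ℤ)), (f l) ^ 2) := by
        have h2 := sq_sum_le (Finset.Icc (k - (j : ℤ)) (k + (j : ℤ))) f
        rw [hc] at h2
        exact mul_le_mul_right h2 _
    _ = 2 * ((c⁻¹ * c) * (c⁻¹ * ∑ l ∈ Finset.Icc (k - (j : ℤ)) (k + (j : ℤ)), (f l) ^ 2)) := by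
        ring
    _ ≤ 2 * ∑' l, (f l) ^ 2 := by
        rw [ENNReal.inv_mul_cancel (two1_ne_zero j) (two1_ne_top j), one_mul]
        refine mul_le_mul_right ?_ 2
        calc c⁻¹ * ∑ l ∈ Finset.Icc (k - (j : ℤ)) (k + (j : ℤ)), (f l) ^ 2
            ≤ 1 * ∑ l ∈ Finset.Icc (k - (j : ℤ)) (k + (j : ℤ)), (f l) ^ 2 := by
              refine mul_le_mul_left ?_ _
              rw [ENNReal.inv_le_one]
              exact Nat.one_le_cast.mpr (by omega)
          _ ≤ ∑' l, (f l) ^ 2 := by rw [one_mul]; exact ENNReal.sum_le_tsum _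

lemma MM_ne_top {f : ℤ → ℝ≥0∞} (hf : ∑' k, (f k) ^ 2 ≠ ⊤) (k : ℤ) : MM f k ≠ ⊤ := by
  have hB : MM f k ≤ max 1 (2 * ∑' l, (f l) ^ 2) := by
    refine iSup_le fun j => ?_
    rcases le_total (Av j f k) 1 with h | h
    · exact h.trans (le_max_left _ _)
    · refine le_trans ?_ (le_max_right _ _)
      calc Av j f k = Av j f k * 1 := (mul_one _).symm
        _ ≤ Av j f k * Av j f k := mul_le_mul_right h _
        _ = (Av j f k) ^ 2 := (sq _).symm
        _ ≤ 2 * ∑' l, (f l) ^ 2 := Av_sq_le f j k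
  have hX : 2 * ∑' l, (f l) ^ 2 ≠ ⊤ := ENNReal.mul_ne_top (by simp) hf
  exact ne_top_of_le_ne_top (max_lt ENNReal.one_lt_top hX.lt_top).ne hB

lemma MM_tsum_le (g : ℕ → ℤ → ℝ≥0∞) (k : ℤ) :
    MM (fun l => ∑' i, g i l) k ≤ ∑' i, MM (g i) k := by
  refine iSup_le fun j => ?_
  rw [Av_tsum]
  exact ENNReal.tsum_le_tsum fun i => Av_le_MM j (g i) k

/-- Easy Cauchy–Schwarz (with a loss of 2) for weighted series. -/
lemma tsum_cs (a x : ℕ → ℝ≥0∞) :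
    (∑' i, a i * x i) ^ 2 ≤ 2 * (∑' i, a i) * ∑' i, a i * (x i) ^ 2 := by
  have expand : (∑' i, a i * x i) ^ 2 = ∑' i, ∑' j, (a i * x i) * (a j * x j) := by
    rw [sq, ← ENNReal.tsum_mul_right]
    exact tsum_congr fun i => (ENNReal.tsum_mul_left).symm
  rw [expand]
  calc ∑' i, ∑' j, (a i * x i) * (a j * x j)
      ≤ ∑' i, ∑' j, (a i * a j) * ((x i) ^ 2 + (x j) ^ 2) := by
        refine ENNReal.tsum_le_tsum fun i => ENNReal.tsum_le_tsum fun j => ?_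
        calc (a i * x i) * (a j * x j) = (a i * a j) * (x i * x j) := by ring
          _ ≤ (a i * a j) * ((x i) ^ 2 + (x j) ^ 2) := mul_le_mul_right (mul_self_le _ _) _
    _ = 2 * (∑' i, a i) * ∑' i, a i * (x i) ^ 2 := by
        have h1 : ∀ i, ∑' j, (a i * a j) * ((x i) ^ 2 + (x j) ^ 2)
            = a i * (x i) ^ 2 * (∑' j, a j) + a i * (∑' j, a j * (x j) ^ 2) := by
          intro i
          calc ∑' j, (a i * a j) * ((x i) ^ 2 + (x j) ^ 2)
              = ∑' j, ((a i * (x i) ^ 2) * a j + a i * (a j * (x j) ^ 2)) :=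
                tsum_congr fun j => by ring
            _ = _ := by
              rw [ENNReal.tsum_add, ENNReal.tsum_mul_left, ENNReal.tsum_mul_left]
        rw [tsum_congr h1, ENNReal.tsum_add, ENNReal.tsum_mul_right, ENNReal.tsum_mul_right]
        ring

lemma zpow_ne_zero' (t : ℤ) : (2 : ℝ≥0∞) ^ t ≠ 0 := by
  rw [← ENNReal.coe_ofNat, ← ENNReal.coe_zpow (by norm_num)]
  simp only [ne_eq, ENNReal.coe_eq_zero]
  exact zpow_ne_zero _ (by norm_num)

lemma zpow_ne_top' (t : ℤ) : (2 : ℝ≥0∞) ^ t ≠ ⊤ := by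
  rw [← ENNReal.coe_ofNat, ← ENNReal.coe_zpow (by norm_num)]
  exact ENNReal.coe_ne_top

lemma zpow_coe (t : ℤ) : (((2 : ℝ≥0) ^ t : ℝ≥0) : ℝ≥0∞) = (2 : ℝ≥0∞) ^ t := by
  rw [ENNReal.coe_zpow (by norm_num)]
  norm_num

/-- Geometric sum over all integers `≤ T`. -/
lemma tsum_zpow_le (T : ℤ) :
    ∑' t : ℤ, (if t ≤ T then (2 : ℝ≥0∞) ^ t else 0) = 2 ^ (T + 1) := by
  have h2 : (2 : ℝ≥0∞) ≠ 0 := by norm_num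
  have h2t : (2 : ℝ≥0∞) ≠ ⊤ := by norm_num
  have key : ∑' t : ℤ, (if t ≤ T then (2 : ℝ≥0∞) ^ t else 0)
      = ∑' n : ℕ, (2 : ℝ≥0∞) ^ (T - (n : ℤ)) := by
    refine tsum_eq_tsum_of_ne_zero_bij (fun n => T - ((n : ℕ) : ℤ)) ?_ ?_ ?_
    · intro m n h
      simp only [Subtype.ext_iff] at *
      omega
    · intro t ht
      rw [Function.mem_support] at ht
      by_cases h : t ≤ T
      swap
      · simp [h] at ht
      refine ⟨⟨(T - t).toNat, ?_⟩, ?_⟩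
      · simp only [Function.mem_support]
        exact zpow_ne_zero' _
      · simp only
        omega
    · rintro ⟨n, hn⟩
      simp only
      rw [if_pos (by omega)]
  rw [key]
  have hterm : ∀ n : ℕ, (2 : ℝ≥0∞) ^ (T - (n : ℤ)) = 2 ^ T * ((2 : ℝ≥0∞)⁻¹) ^ n := by
    intro n
    rw [sub_eq_add_neg, ENNReal.zpow_add h2 h2t, ENNReal.zpow_neg, zpow_natCast,
      ← ENNReal.inv_pow]
  rw [tsum_congr hterm, ENNReal.tsum_mul_left, ENNReal.tsum_geometric,
    ENNReal.one_sub_inv_two, inv_inv, ENNReal.zpow_add h2 h2t, zpow_one]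

/-- Pointwise discrete layer-cake bound. -/
lemma ptwise_layercake {x : ℝ≥0∞} (hx : x ≠ ⊤) :
    x ^ 2 ≤ 16 * ∑' t : ℤ, (if (2 : ℝ≥0∞) ^ t < x then (2 : ℝ≥0∞) ^ (2 * t) else 0) := by
  rcases eq_or_ne x 0 with rfl | hx0
  · simp
  lift x to ℝ≥0 using hx with x'
  have hx'0 : 0 < x' := by
    rw [pos_iff_ne_zero]
    exact fun h => hx0 (by simp [h])
  have hlt : (2 : ℝ≥0∞) ^ (Int.log 2 x' - 1) < (x' : ℝ≥0∞) := by
    rw [← zpow_coe]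
    refine ENNReal.coe_lt_coe.mpr ?_
    calc (2 : ℝ≥0) ^ (Int.log 2 x' - 1) < 2 ^ (Int.log 2 x') :=
          zpow_lt_zpow_right₀ (by norm_num) (by omega)
      _ ≤ x' := Int.zpow_log_le_self (by norm_num) hx'0
  have hub : (x' : ℝ≥0∞) < (2 : ℝ≥0∞) ^ (Int.log 2 x' - 1 + 2) := by
    rw [← zpow_coe]
    refine ENNReal.coe_lt_coe.mpr ?_
    calc x' < (2 : ℝ≥0) ^ (Int.log 2 x' + 1) := Int.lt_zpow_succ_log_self (by norm_num) x'
      _ = 2 ^ (Int.log 2 x' - 1 + 2) := by congr 1; ring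
  calc (x' : ℝ≥0∞) ^ 2 ≤ ((2 : ℝ≥0∞) ^ (Int.log 2 x' - 1 + 2)) ^ 2 :=
        pow_le_pow_left₀ (zero_le) hub.le 2
    _ = 16 * (2 : ℝ≥0∞) ^ (2 * (Int.log 2 x' - 1)) := by
        rw [sq, ← ENNReal.zpow_add (by norm_num) (by norm_num),
          show (Int.log 2 x' - 1 + 2) + (Int.log 2 x' - 1 + 2)
            = 2 * (Int.log 2 x' - 1) + ((4 : ℕ) : ℤ) by push_cast; ring,
          ENNReal.zpow_add (by norm_num) (by norm_num), zpow_natCast]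
        norm_num [mul_comm]
    _ ≤ 16 * ∑' t : ℤ, (if (2 : ℝ≥0∞) ^ t < (x' : ℝ≥0∞) then (2 : ℝ≥0∞) ^ (2 * t) else 0) := by
        refine mul_le_mul_right ?_ 16
        have := ENNReal.le_tsum
          (f := fun t : ℤ => if (2 : ℝ≥0∞) ^ t < (x' : ℝ≥0∞) then (2 : ℝ≥0∞) ^ (2 * t) else 0)
          (Int.log 2 x' - 1)
        rwa [if_pos hlt] at this

/-- Geometric resummation bound. -/
lemma resum (x : ℝ≥0∞) :
    ∑' t : ℤ, (if (2 : ℝ≥0∞) ^ (t - 1) < x then (2 : ℝ≥0∞) ^ (t + 1) * x else 0) ≤ 8 * x ^ 2 := by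
  rcases eq_or_ne x 0 with rfl | hx0
  · simp
  rcases eq_or_ne x ⊤ with rfl | hxt
  · have h8 : (8 : ℝ≥0∞) * ⊤ ^ 2 = ⊤ := by
      rw [ENNReal.top_pow (by norm_num), ENNReal.mul_top (by norm_num)]
    rw [h8]; exact le_top
  lift x to ℝ≥0 using hxt with x'
  have hx'0 : 0 < x' := by
    rw [pos_iff_ne_zero]
    exact fun h => hx0 (by simp [h])
  have hbound : ∀ t : ℤ, (if (2 : ℝ≥0∞) ^ (t - 1) < (x' : ℝ≥0∞) then (2 : ℝ≥0∞) ^ (t + 1) * x' else 0)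
      ≤ (x' : ℝ≥0∞) * (if t ≤ Int.log 2 x' + 1 then (2 : ℝ≥0∞) ^ (t + 1) else 0) := by
    intro t
    split_ifs with h1 h2
    · rw [mul_comm]
    · exfalso; apply h2
      have hle : (2 : ℝ≥0) ^ (t - 1) ≤ x' := by
        rw [← zpow_coe, ENNReal.coe_lt_coe] at h1
        exact h1.le
      have hlog : t - 1 ≤ Int.log 2 x' :=
        (Int.zpow_le_iff_le_log (by norm_num) hx'0).mp hle
      omega
    · exact zero_le
    · exact zero_le
  calc ∑' t : ℤ, (if (2 : ℝ≥0∞) ^ (t - 1) < (x' : ℝ≥0∞) then (2 : ℝ≥0∞) ^ (t + 1) * x' else 0)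
      ≤ ∑' t : ℤ, (x' : ℝ≥0∞) * (if t ≤ Int.log 2 x' + 1 then (2 : ℝ≥0∞) ^ (t + 1) else 0) :=
        ENNReal.tsum_le_tsum hbound
    _ = (x' : ℝ≥0∞) * ∑' t : ℤ, (if t ≤ Int.log 2 x' + 1 then (2 : ℝ≥0∞) ^ (t + 1) else 0) :=
        ENNReal.tsum_mul_left
    _ ≤ 8 * (x' : ℝ≥0∞) ^ 2 := ?_
  have hshift : ∑' t : ℤ, (if t ≤ Int.log 2 x' + 1 then (2 : ℝ≥0∞) ^ (t + 1) else 0)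
      = 2 * ∑' t : ℤ, (if t ≤ Int.log 2 x' + 1 then (2 : ℝ≥0∞) ^ t else 0) := by
    rw [← ENNReal.tsum_mul_left]
    refine tsum_congr fun t => ?_
    split_ifs
    · rw [ENNReal.zpow_add (by norm_num) (by norm_num), zpow_one]; ring
    · exact (mul_zero 2).symm
  rw [hshift, tsum_zpow_le]
  have h2T : (2 : ℝ≥0∞) ^ (Int.log 2 x' + 1 + 1) = 4 * 2 ^ (Int.log 2 x') := by
    rw [show Int.log 2 x' + 1 + 1 = ((2 : ℕ) : ℤ) + Int.log 2 x' by push_cast; ring,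
      ENNReal.zpow_add (by norm_num) (by norm_num), zpow_natCast]
    norm_num
  rw [h2T]
  have hlogle : (2 : ℝ≥0∞) ^ (Int.log 2 x') ≤ (x' : ℝ≥0∞) := by
    rw [← zpow_coe]
    exact ENNReal.coe_le_coe.mpr (Int.zpow_log_le_self (by norm_num) hx'0)
  calc (x' : ℝ≥0∞) * (2 * (4 * 2 ^ (Int.log 2 x'))) = 8 * ((x' : ℝ≥0∞) * 2 ^ (Int.log 2 x')) := by
        ring
    _ ≤ 8 * ((x' : ℝ≥0∞) * x') := mul_le_mul_right (mul_le_mul_right hlogle _) 8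
    _ = 8 * (x' : ℝ≥0∞) ^ 2 := by rw [sq]

/-- Finite Vitali covering lemma on `ℤ`. -/
lemma vitali (r : ℤ → ℕ) : ∀ n : ℕ, ∀ s : Finset ℤ, s.card ≤ n →
    ∃ u : Finset ℤ, u ⊆ s ∧
      ((u : Set ℤ).PairwiseDisjoint fun b => Finset.Icc (b - (r b : ℤ)) (b + (r b : ℤ))) ∧
      ∀ a ∈ s, ∃ b ∈ u, a ∈ Finset.Icc (b - 3 * (r b : ℤ)) (b + 3 * (r b : ℤ)) := by
  intro n
  induction n with
  | zero =>
    intro s hs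
    rw [Nat.le_zero, Finset.card_eq_zero] at hs
    exact ⟨∅, by simp [hs]⟩
  | succ n ih =>
    intro s hs
    rcases s.eq_empty_or_nonempty with rfl | hne
    · exact ⟨∅, by simp⟩
    obtain ⟨b, hb, hmax⟩ := Finset.exists_max_image s r hne
    classical
    set s' := s.filter (fun a =>
      Disjoint (Finset.Icc (a - (r a : ℤ)) (a + (r a : ℤ)))
        (Finset.Icc (b - (r b : ℤ)) (b + (r b : ℤ)))) with hs'
    have hbmem : b ∈ Finset.Icc (b - (r b : ℤ)) (b + (r b : ℤ)) := by
      simp only [Finset.mem_Icc]; omega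
    have hbs' : b ∉ s' := by
      intro hmem
      rw [hs', Finset.mem_filter] at hmem
      exact (Finset.disjoint_left.mp hmem.2 hbmem) hbmem
    have hcard : s'.card ≤ n := by
      have hlt : s'.card < s.card :=
        Finset.card_lt_card ⟨Finset.filter_subset _ _, fun hsub => hbs' (hsub hb)⟩
      omega
    obtain ⟨u', hu's, hdisj, hcov⟩ := ih s' hcard
    refine ⟨insert b u', ?_, ?_, ?_⟩
    · exact Finset.insert_subset hb (hu's.trans (Finset.filter_subset _ _))
    · rw [Finset.coe_insert]
      refine Set.pairwiseDisjoint_insert.mpr ⟨hdisj, fun a ha _ => ?_⟩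
      have ha' := hu's ha
      rw [hs', Finset.mem_filter] at ha'
      exact (ha'.2.symm : _)
    · intro a ha
      by_cases hin : a ∈ s'
      · obtain ⟨b', hb', hmem⟩ := hcov a hin
        exact ⟨b', Finset.mem_insert_of_mem hb', hmem⟩
      · refine ⟨b, Finset.mem_insert_self _ _, ?_⟩
        have hnd : ¬ Disjoint (Finset.Icc (a - (r a : ℤ)) (a + (r a : ℤ)))
            (Finset.Icc (b - (r b : ℤ)) (b + (r b : ℤ))) := by
          intro hd
          exact hin (by rw [hs', Finset.mem_filter]; exact ⟨ha, hd⟩)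
        obtain ⟨x, hx1, hx2⟩ := Finset.not_disjoint_iff.mp hnd
        rw [Finset.mem_Icc] at hx1 hx2
        have hra : (r a : ℤ) ≤ (r b : ℤ) := Int.ofNat_le.mpr (hmax a ha)
        rw [Finset.mem_Icc]
        omega

/-- Weak type (1,1) bound for the discrete maximal function, finite-set form. -/
lemma weak_type (f : ℤ → ℝ≥0∞) (lam : ℝ≥0∞) (s : Finset ℤ)
    (hs : ∀ k ∈ s, lam < MM f k) :
    lam * s.card ≤ 3 * ∑' l, f l := by
  classical
  have hex : ∀ k ∈ s, ∃ j : ℕ,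
      lam * ((2 * j + 1 : ℕ) : ℝ≥0∞) < ∑ l ∈ Finset.Icc (k - (j : ℤ)) (k + (j : ℤ)), f l := by
    intro k hk
    obtain ⟨j, hj⟩ := lt_iSup_iff.mp (hs k hk)
    refine ⟨j, ?_⟩
    have h1 : lam * ((2 * j + 1 : ℕ) : ℝ≥0∞)
        < Av j f k * ((2 * j + 1 : ℕ) : ℝ≥0∞) :=
      ENNReal.mul_lt_mul_left (two1_ne_zero j) (two1_ne_top j) hj
    calc lam * ((2 * j + 1 : ℕ) : ℝ≥0∞) < Av j f k * ((2 * j + 1 : ℕ) : ℝ≥0∞) := h1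
      _ = ∑ l ∈ Finset.Icc (k - (j : ℤ)) (k + (j : ℤ)), f l := by
        rw [Av, mul_comm, ← mul_assoc,
          ENNReal.mul_inv_cancel (two1_ne_zero j) (two1_ne_top j), one_mul]
  set r : ℤ → ℕ := fun k =>
    if h : ∃ j : ℕ, lam * ((2 * j + 1 : ℕ) : ℝ≥0∞)
        < ∑ l ∈ Finset.Icc (k - (j : ℤ)) (k + (j : ℤ)), f l then h.choose else 0 with hrdef
  have hr : ∀ k ∈ s,
      lam * ((2 * r k + 1 : ℕ) : ℝ≥0∞)
        < ∑ l ∈ Finset.Icc (k - (r k : ℤ)) (k + (r k : ℤ)), f l := by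
    intro k hk
    have h := hex k hk
    rw [hrdef]
    simp only [dif_pos h]
    exact h.choose_spec
  obtain ⟨u, hus, hdisj, hcov⟩ := vitali r s.card s le_rfl
  have hcardle : (s.card : ℝ≥0∞) ≤ ∑ b ∈ u, ((6 * r b + 1 : ℕ) : ℝ≥0∞) := by
    have hsub : s ⊆ u.biUnion fun b => Finset.Icc (b - 3 * (r b : ℤ)) (b + 3 * (r b : ℤ)) := by
      intro a ha
      obtain ⟨b, hb, hmem⟩ := hcov a ha
      exact Finset.mem_biUnion.mpr ⟨b, hb, hmem⟩
    have h1 : s.card ≤ ∑ b ∈ u, (6 * r b + 1) := by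
      calc s.card ≤ (u.biUnion fun b => Finset.Icc (b - 3 * (r b : ℤ)) (b + 3 * (r b : ℤ))).card :=
            Finset.card_le_card hsub
        _ ≤ ∑ b ∈ u, (Finset.Icc (b - 3 * (r b : ℤ)) (b + 3 * (r b : ℤ))).card :=
            Finset.card_biUnion_le
        _ = ∑ b ∈ u, (6 * r b + 1) := by
            refine Finset.sum_congr rfl fun b _ => ?_
            rw [Int.card_Icc]; omega
    calc (s.card : ℝ≥0∞) ≤ ((∑ b ∈ u, (6 * r b + 1) : ℕ) : ℝ≥0∞) := by exact_mod_cast h1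
      _ = ∑ b ∈ u, ((6 * r b + 1 : ℕ) : ℝ≥0∞) := by rw [Nat.cast_sum]
  calc lam * s.card ≤ lam * ∑ b ∈ u, ((6 * r b + 1 : ℕ) : ℝ≥0∞) := mul_le_mul_right hcardle lam
    _ = ∑ b ∈ u, lam * ((6 * r b + 1 : ℕ) : ℝ≥0∞) := by rw [Finset.mul_sum]
    _ ≤ ∑ b ∈ u, 3 * (lam * ((2 * r b + 1 : ℕ) : ℝ≥0∞)) := by
        refine Finset.sum_le_sum fun b _ => ?_
        rw [← mul_assoc, mul_comm (3 : ℝ≥0∞) lam, mul_assoc]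
        refine mul_le_mul_right ?_ lam
        calc ((6 * r b + 1 : ℕ) : ℝ≥0∞) ≤ ((3 * (2 * r b + 1) : ℕ) : ℝ≥0∞) := by
              refine Nat.cast_le.mpr (by omega)
          _ = 3 * ((2 * r b + 1 : ℕ) : ℝ≥0∞) := by push_cast; ring
    _ ≤ ∑ b ∈ u, 3 * ∑ l ∈ Finset.Icc (b - (r b : ℤ)) (b + (r b : ℤ)), f l := by
        refine Finset.sum_le_sum fun b hb => mul_le_mul_right (hr b (hus hb)).le 3
    _ = 3 * ∑ b ∈ u, ∑ l ∈ Finset.Icc (b - (r b : ℤ)) (b + (r b : ℤ)), f l := by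
        rw [Finset.mul_sum]
    _ = 3 * ∑ l ∈ u.biUnion fun b => Finset.Icc (b - (r b : ℤ)) (b + (r b : ℤ)), f l := by
        rw [Finset.sum_biUnion hdisj]
    _ ≤ 3 * ∑' l, f l := mul_le_mul_right (ENNReal.sum_le_tsum _) 3

/-- Truncation step. -/
lemma trunc (f : ℤ → ℝ≥0∞) (c : ℝ≥0∞) (hc : c ≠ ⊤) (k : ℤ)
    (h : c + c < MM f k) :
    c < MM (fun l => if c < f l then f l else 0) k := by
  set g : ℤ → ℝ≥0∞ := fun l => if c < f l then f l else 0 with hg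
  have key : MM f k ≤ MM g k + c := by
    refine iSup_le fun j => ?_
    have hpt : ∀ l, f l ≤ g l + c := by
      intro l
      by_cases hl : c < f l
      · simp only [hg, if_pos hl]; exact le_self_add
      · simp only [hg, if_neg hl]; rw [zero_add]; exact not_lt.mp hl
    calc Av j f k ≤ Av j (fun l => g l + c) k := Av_mono hpt j k
      _ = Av j g k + c := by rw [Av_add]; congr 1; exact Av_const j c k
      _ ≤ MM g k + c := add_le_add_left (Av_le_MM j g k) c
  have h2 : c + c < MM g k + c := lt_of_lt_of_le h key
  exact (ENNReal.add_lt_add_iff_right hc).mp h2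

lemma zpow_split (t : ℤ) : (2 : ℝ≥0∞) ^ (t - 1) + (2 : ℝ≥0∞) ^ (t - 1) = 2 ^ t := by
  rw [← two_mul]
  have h : (2 : ℝ≥0∞) ^ t = 2 ^ (1 + (t - 1)) := by congr 1; ring
  rw [h, ENNReal.zpow_add (by norm_num) (by norm_num), zpow_one]

/-- ℓ² bound for the discrete centered maximal function. -/
lemma l2_bound (f : ℤ → ℝ≥0∞) (hf : ∑' k, (f k) ^ 2 ≠ ⊤) :
    ∑' k, (MM f k) ^ 2 ≤ 400 * ∑' k, (f k) ^ 2 := by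
  classical
  set N : ℤ → ℝ≥0∞ := fun t => ∑' k : ℤ, (if (2 : ℝ≥0∞) ^ t < MM f k then 1 else 0) with hN
  set H : ℤ → ℝ≥0∞ := fun t =>
    ∑' l : ℤ, (if (2 : ℝ≥0∞) ^ (t - 1) < f l then f l else 0) with hH
  -- Step 1: layer cake
  have step1 : ∑' k, (MM f k) ^ 2
      ≤ 16 * ∑' t : ℤ, (2 : ℝ≥0∞) ^ (2 * t) * N t := by
    calc ∑' k, (MM f k) ^ 2
        ≤ ∑' k, 16 * ∑' t : ℤ, (if (2 : ℝ≥0∞) ^ t < MM f k then (2 : ℝ≥0∞) ^ (2 * t) else 0) :=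
          ENNReal.tsum_le_tsum fun k => ptwise_layercake (MM_ne_top hf k)
      _ = 16 * ∑' k, ∑' t : ℤ, (if (2 : ℝ≥0∞) ^ t < MM f k then (2 : ℝ≥0∞) ^ (2 * t) else 0) :=
          ENNReal.tsum_mul_left
      _ = 16 * ∑' t : ℤ, ∑' k, (if (2 : ℝ≥0∞) ^ t < MM f k then (2 : ℝ≥0∞) ^ (2 * t) else 0) := by
          rw [ENNReal.tsum_comm]
      _ = 16 * ∑' t : ℤ, (2 : ℝ≥0∞) ^ (2 * t) * N t := by
          refine congrArg _ (tsum_congr fun t => ?_)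
          rw [hN, ← ENNReal.tsum_mul_left]
          exact tsum_congr fun k => by split_ifs <;> simp
  -- Step 2: weak type at level 2^(t-1) after truncation
  have step2 : ∀ t : ℤ, (2 : ℝ≥0∞) ^ (t - 1) * N t ≤ 3 * H t := by
    intro t
    rw [hN]
    simp only
    rw [ENNReal.tsum_eq_iSup_sum, ENNReal.mul_iSup]
    refine iSup_le fun s => ?_
    have hsum : ∑ k ∈ s, (if (2 : ℝ≥0∞) ^ t < MM f k then (1 : ℝ≥0∞) else 0)
        = ((s.filter fun k => (2 : ℝ≥0∞) ^ t < MM f k).card : ℝ≥0∞) := by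
      rw [Finset.sum_boole]
    rw [hsum]
    refine weak_type _ _ _ fun k hk => ?_
    rw [Finset.mem_filter] at hk
    refine trunc f _ (zpow_ne_top' (t - 1)) k ?_
    rw [zpow_split t]
    exact hk.2
  -- Step 3: resummation
  have step3 : ∑' t : ℤ, (2 : ℝ≥0∞) ^ (2 * t) * N t
      ≤ 3 * ∑' t : ℤ, (2 : ℝ≥0∞) ^ (t + 1) * H t := by
    rw [← ENNReal.tsum_mul_left]
    refine ENNReal.tsum_le_tsum fun t => ?_
    have hNle : N t ≤ (2 : ℝ≥0∞) ^ (1 - t) * (3 * H t) := by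
      have hid : N t = (2 : ℝ≥0∞) ^ (1 - t) * ((2 : ℝ≥0∞) ^ (t - 1) * N t) := by
        rw [← mul_assoc, ← ENNReal.zpow_add (by norm_num) (by norm_num),
          show (1 - t) + (t - 1) = 0 by ring, zpow_zero, one_mul]
      rw [hid]
      exact mul_le_mul_right (step2 t) _
    calc (2 : ℝ≥0∞) ^ (2 * t) * N t
        ≤ (2 : ℝ≥0∞) ^ (2 * t) * ((2 : ℝ≥0∞) ^ (1 - t) * (3 * H t)) :=
          mul_le_mul_right hNle _
      _ = 3 * ((2 : ℝ≥0∞) ^ (t + 1) * H t) := by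
          rw [← mul_assoc, ← ENNReal.zpow_add (by norm_num) (by norm_num),
            show 2 * t + (1 - t) = t + 1 by ring]
          ring
  have step4 : ∑' t : ℤ, (2 : ℝ≥0∞) ^ (t + 1) * H t ≤ 8 * ∑' l, (f l) ^ 2 := by
    have hswap : ∑' t : ℤ, (2 : ℝ≥0∞) ^ (t + 1) * H t
        = ∑' l : ℤ, ∑' t : ℤ,
          (if (2 : ℝ≥0∞) ^ (t - 1) < f l then (2 : ℝ≥0∞) ^ (t + 1) * f l else 0) := by
      rw [← ENNReal.tsum_comm]
      refine tsum_congr fun t => ?_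
      rw [hH]
      simp only
      rw [← ENNReal.tsum_mul_left]
      refine tsum_congr fun l => ?_
      split_ifs <;> simp
    rw [hswap, ← ENNReal.tsum_mul_left]
    refine ENNReal.tsum_le_tsum fun l => ?_
    exact resum (f l)
  calc ∑' k, (MM f k) ^ 2 ≤ 16 * ∑' t : ℤ, (2 : ℝ≥0∞) ^ (2 * t) * N t := step1
    _ ≤ 16 * (3 * ∑' t : ℤ, (2 : ℝ≥0∞) ^ (t + 1) * H t) := mul_le_mul_right step3 16
    _ ≤ 16 * (3 * (8 * ∑' l, (f l) ^ 2)) := by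
        exact mul_le_mul_right (mul_le_mul_right step4 3) 16
    _ = 384 * ∑' l, (f l) ^ 2 := by ring
    _ ≤ 400 * ∑' l, (f l) ^ 2 := mul_le_mul_left (by norm_num) _

lemma inv800_mul_400 : (800 : ℝ≥0∞)⁻¹ * 400 = 2⁻¹ := by
  have h : (800 : ℝ≥0∞) = 2 * 400 := by norm_num
  rw [h, ENNReal.mul_inv (Or.inl (by norm_num)) (Or.inl (by norm_num)), mul_assoc,
    ENNReal.inv_mul_cancel (by norm_num) (by norm_num), mul_one]

lemma tsum_half_geo : ∑' i : ℕ, ((2 : ℝ≥0∞)⁻¹) ^ i = 2 := by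
  rw [ENNReal.tsum_geometric, ENNReal.one_sub_inv_two, inv_inv]

lemma tsum_a_le : ∑' i : ℕ, ((800 : ℝ≥0∞)⁻¹) ^ i ≤ 2 := by
  rw [← tsum_half_geo]
  refine ENNReal.tsum_le_tsum fun i => ?_
  exact pow_le_pow_left₀ (zero_le) (ENNReal.inv_le_inv' (by norm_num)) i

/-- Rubio de Francia construction. -/
lemma rdf (f : ℤ → ℝ≥0∞) (hf : ∑' k, (f k) ^ 2 ≠ ⊤) :
    ∃ g : ℤ → ℝ≥0∞, (∀ k, f k ≤ g k) ∧ (∀ k, g k ≠ ⊤) ∧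
      (∑' k, (g k) ^ 2 ≤ 8 * ∑' k, (f k) ^ 2) ∧
      ∀ j k, Av j g k ≤ 800 * g k := by
  classical
  set x : ℕ → ℤ → ℝ≥0∞ := fun i => MM^[i] f with hx
  have hx0 : x 0 = f := rfl
  have hxs : ∀ i, x (i + 1) = MM (x i) := fun i => Function.iterate_succ_apply' MM i f
  have hxsum : ∀ i, ∑' k, (x i k) ^ 2 ≤ 400 ^ i * ∑' k, (f k) ^ 2 := by
    intro i
    induction i with
    | zero => simp [hx0]
    | succ i ih =>
      have hfin : ∑' k, (x i k) ^ 2 ≠ ⊤ :=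
        ne_top_of_le_ne_top (ENNReal.mul_ne_top (ENNReal.pow_ne_top (by norm_num)) hf) ih
      calc ∑' k, (x (i + 1) k) ^ 2 = ∑' k, (MM (x i) k) ^ 2 := by rw [hxs i]
        _ ≤ 400 * ∑' k, (x i k) ^ 2 := l2_bound _ hfin
        _ ≤ 400 * (400 ^ i * ∑' k, (f k) ^ 2) := mul_le_mul_right ih _
        _ = 400 ^ (i + 1) * ∑' k, (f k) ^ 2 := by rw [pow_succ]; ring
  set a : ℕ → ℝ≥0∞ := fun i => ((800 : ℝ≥0∞)⁻¹) ^ i with ha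
  set g : ℤ → ℝ≥0∞ := fun k => ∑' i, a i * x i k with hgdef
  have hfg : ∀ k, f k ≤ g k := by
    intro k
    have h0 : a 0 * x 0 k = f k := by rw [ha, hx0]; simp
    calc f k = a 0 * x 0 k := h0.symm
      _ ≤ ∑' i, a i * x i k := ENNReal.le_tsum 0
  have hsum_g : ∑' k, (g k) ^ 2 ≤ 8 * ∑' k, (f k) ^ 2 := by
    have hcs : ∀ k, (g k) ^ 2 ≤ 4 * ∑' i, a i * (x i k) ^ 2 := by
      intro k
      calc (g k) ^ 2 ≤ 2 * (∑' i, a i) * ∑' i, a i * (x i k) ^ 2 :=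
            tsum_cs a fun i => x i k
        _ ≤ 2 * 2 * ∑' i, a i * (x i k) ^ 2 := by
            exact mul_le_mul_left (mul_le_mul_right tsum_a_le 2) _
        _ = 4 * ∑' i, a i * (x i k) ^ 2 := by norm_num
    calc ∑' k, (g k) ^ 2 ≤ ∑' k, 4 * ∑' i, a i * (x i k) ^ 2 := ENNReal.tsum_le_tsum hcs
      _ = 4 * ∑' k, ∑' i, a i * (x i k) ^ 2 := ENNReal.tsum_mul_left
      _ = 4 * ∑' i, ∑' k, a i * (x i k) ^ 2 := by rw [ENNReal.tsum_comm]
      _ = 4 * ∑' i, a i * ∑' k, (x i k) ^ 2 := by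
          refine congrArg _ (tsum_congr fun i => ?_)
          rw [ENNReal.tsum_mul_left]
      _ ≤ 4 * ∑' i, a i * (400 ^ i * ∑' k, (f k) ^ 2) := by
          refine mul_le_mul_right (ENNReal.tsum_le_tsum fun i => mul_le_mul_right (hxsum i) _) _
      _ = 4 * ∑' i, ((2 : ℝ≥0∞)⁻¹) ^ i * ∑' k, (f k) ^ 2 := by
          refine congrArg _ (tsum_congr fun i => ?_)
          rw [ha, ← mul_assoc, ← mul_pow, inv800_mul_400]
      _ = 4 * (2 * ∑' k, (f k) ^ 2) := by
          rw [ENNReal.tsum_mul_right, tsum_half_geo]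
      _ = 8 * ∑' k, (f k) ^ 2 := by ring
  have hgne : ∀ k, g k ≠ ⊤ := by
    intro k
    have h8 : (8 : ℝ≥0∞) * ∑' k, (f k) ^ 2 ≠ ⊤ := ENNReal.mul_ne_top (by norm_num) hf
    have hsq : (g k) ^ 2 ≠ ⊤ :=
      ne_top_of_le_ne_top h8 ((ENNReal.le_tsum k).trans hsum_g)
    intro htop
    rw [htop] at hsq
    exact hsq (by rw [ENNReal.top_pow (by norm_num)])
  refine ⟨g, hfg, hgne, hsum_g, ?_⟩
  intro j k
  have hshift : ∑' i, a (i + 1) * x (i + 1) k ≤ ∑' i, a i * x i k := by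
    refine Summable.tsum_le_tsum_of_inj (fun i => i + 1) (fun m n h => by simpa using h)
      (fun c _ => zero_le) (fun i => le_rfl) ENNReal.summable ENNReal.summable
  calc Av j g k = ∑' i, a i * Av j (x i) k := by
        rw [hgdef]
        rw [Av_tsum (fun i l => a i * x i l) j k]
        exact tsum_congr fun i => Av_smul j (a i) (x i) k
    _ ≤ ∑' i, a i * x (i + 1) k := by
        refine ENNReal.tsum_le_tsum fun i => mul_le_mul_right ?_ _
        rw [hxs i]
        exact Av_le_MM j (x i) k
    _ = ∑' i, 800 * (a (i + 1) * x (i + 1) k) := by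
        refine tsum_congr fun i => ?_
        have hkey : (800 : ℝ≥0∞) * 800⁻¹ ^ (i + 1) = 800⁻¹ ^ i := by
          rw [pow_succ, mul_comm ((800 : ℝ≥0∞)⁻¹ ^ i), ← mul_assoc,
            ENNReal.mul_inv_cancel (by norm_num) (by norm_num), one_mul]
        simp only [ha]
        rw [← mul_assoc, hkey]
    _ = 800 * ∑' i, a (i + 1) * x (i + 1) k := ENNReal.tsum_mul_left
    _ ≤ 800 * g k := mul_le_mul_right hshift _

end AdmEnv

/-- Every square-summable nonnegative sequence `c⁰ : ℤ → [0,∞)` can be placed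
under a comparable admissible frequency envelope `c` satisfying the maximal property
`(Mc)_k ≤ K · c_k`, with `‖c‖_{ℓ²} ≤ K · ‖c⁰‖_{ℓ²}`, for an absolute constant `K ≥ 1`. -/
theorem exists_admissible_envelope :
    ∃ K : ℝ, 1 ≤ K ∧
      ∀ c0 : ℤ → ℝ, (∀ k, 0 ≤ c0 k) → Summable (fun k => (c0 k) ^ 2) →
        ∃ c : ℤ → ℝ,
          (∀ k, 0 ≤ c k) ∧
          (∀ k, c0 k ≤ c k) ∧
          Summable (fun k => (c k) ^ 2) ∧
          (∑' k, (c k) ^ 2) ≤ K ^ 2 * ∑' k, (c0 k) ^ 2 ∧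
          (∀ (k : ℤ) (j : ℕ),
            (2 * (j : ℝ) + 1)⁻¹ * ∑ l ∈ Finset.Icc (k - (j : ℤ)) (k + (j : ℤ)), c l
              ≤ K * c k) := by
  refine ⟨800, by norm_num, ?_⟩
  intro c0 h0 hsum
  set f : ℤ → ℝ≥0∞ := fun k => ENNReal.ofReal (c0 k) with hfdef
  have hfsq : ∀ k, (f k) ^ 2 = ENNReal.ofReal ((c0 k) ^ 2) := by
    intro k
    rw [hfdef]
    simp only
    rw [← ENNReal.ofReal_pow (h0 k)]
  have hF : ∑' k, (f k) ^ 2 = ENNReal.ofReal (∑' k, (c0 k) ^ 2) := by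
    rw [ENNReal.ofReal_tsum_of_nonneg (fun k => sq_nonneg _) hsum]
    exact tsum_congr hfsq
  have hFne : ∑' k, (f k) ^ 2 ≠ ⊤ := by rw [hF]; exact ENNReal.ofReal_ne_top
  obtain ⟨g, hfg, hgne, hgsum, hgmax⟩ := AdmEnv.rdf f hFne
  have hgs : ∑' k, (g k) ^ 2 ≠ ⊤ :=
    ne_top_of_le_ne_top (ENNReal.mul_ne_top (by norm_num) hFne) hgsum
  have hgsqne : ∀ k, (g k) ^ 2 ≠ ⊤ := fun k => ENNReal.pow_ne_top (hgne k)
  refine ⟨fun k => (g k).toReal, fun k => ENNReal.toReal_nonneg, ?_, ?_, ?_, ?_⟩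
  · intro k
    have hc0 : c0 k = (f k).toReal := by rw [hfdef]; simp [ENNReal.toReal_ofReal (h0 k)]
    rw [hc0]
    exact ENNReal.toReal_mono (hgne k) (hfg k)
  · have hs := ENNReal.summable_toReal hgs
    refine (summable_congr fun k => ?_).mpr hs
    rw [← ENNReal.toReal_pow]
  · have h1 : ∑' k, ((g k).toReal) ^ 2 = (∑' k, (g k) ^ 2).toReal := by
      rw [ENNReal.tsum_toReal_eq hgsqne]
      exact tsum_congr fun k => (ENNReal.toReal_pow _ _).symm
    rw [h1]
    have h2 : (∑' k, (g k) ^ 2).toReal ≤ ((8 : ℝ≥0∞) * ∑' k, (f k) ^ 2).toReal :=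
      ENNReal.toReal_mono (ENNReal.mul_ne_top (by norm_num) hFne) hgsum
    have h3 : ((8 : ℝ≥0∞) * ∑' k, (f k) ^ 2).toReal = 8 * ∑' k, (c0 k) ^ 2 := by
      rw [hF, ENNReal.toReal_mul, ENNReal.toReal_ofReal
        (tsum_nonneg fun k => sq_nonneg _)]
      norm_num
    have h4 : (0 : ℝ) ≤ ∑' k, (c0 k) ^ 2 := tsum_nonneg fun k => sq_nonneg _
    calc (∑' k, (g k) ^ 2).toReal ≤ 8 * ∑' k, (c0 k) ^ 2 := by rw [← h3]; exact h2
      _ ≤ (800 : ℝ) ^ 2 * ∑' k, (c0 k) ^ 2 := by nlinarith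
  · intro k j
    have h := hgmax j k
    have hmono := ENNReal.toReal_mono (ENNReal.mul_ne_top (by norm_num) (hgne k)) h
    have hlhs : (AdmEnv.Av j g k).toReal
        = (2 * (j : ℝ) + 1)⁻¹ * ∑ l ∈ Finset.Icc (k - (j : ℤ)) (k + (j : ℤ)), (g l).toReal := by
      rw [AdmEnv.Av, ENNReal.toReal_mul, ENNReal.toReal_inv,
        ENNReal.toReal_sum (fun l _ => hgne l)]
      congr 2
      rw [ENNReal.toReal_natCast]
      push_cast
      ring

    have hrhs : ((800 : ℝ≥0∞) * g k).toReal = 800 * (g k).toReal := by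
      rw [ENNReal.toReal_mul]
      norm_num
    rw [hlhs, hrhs] at hmono
    exact hmono
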